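/- (ℂ*)² is not of ds²_FS-limit type, where ds²_FS is the restriction to (ℂ*)² of the Fubini–Study metric on ℙ²(ℂ). -/

import Mathlib

open Filter Topology

/-- `(ℂ*)²` realized as the standard affine chart points of `ℙ²(ℂ)` with both coordinates
nonzero. -/
def CstarSq : Set (ℂ × ℂ) := {w | w.1 ≠ 0 ∧ w.2 ≠ 0}

/-- The length of the tangent vector `v` at the point `w` for the Fubini–Study metric of
`ℙ²(ℂ)` written in the standard affine chart `ℂ² ⊆ ℙ²(ℂ)` (which contains `(ℂ*)²`):
`|v|²_FS = ((1+‖w‖²)‖v‖² − |⟨v,w⟩|²) / (1+‖w‖²)²`. -/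
noncomputable def fsLen (w v : ℂ × ℂ) : ℝ :=
  Real.sqrt (((1 + ‖w.1‖ ^ 2 + ‖w.2‖ ^ 2) * (‖v.1‖ ^ 2 + ‖v.2‖ ^ 2) -
      ‖v.1 * starRingEnd ℂ w.1 + v.2 * starRingEnd ℂ w.2‖ ^ 2) /
    (1 + ‖w.1‖ ^ 2 + ‖w.2‖ ^ 2) ^ 2)

/-- Compact divergence for sequences of maps from a plane domain into `(ℂ*)²`. -/
def CompactlyDivergent (u : ℕ → ℂ → ℂ × ℂ) (Δ : Set ℂ) : Prop :=
  ∀ K : Set ℂ, K ⊆ Δ → IsCompact K → ∀ L : Set (ℂ × ℂ), L ⊆ CstarSq → IsCompact L →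
    ∃ j₀, ∀ j ≥ j₀, ∀ z ∈ K, u j z ∉ L

/-- Normality for families of maps from a plane domain into `(ℂ*)²`. -/
def IsNormalFamily (𝓕 : Set (ℂ → ℂ × ℂ)) (Δ : Set ℂ) : Prop :=
  ∀ u : ℕ → ℂ → ℂ × ℂ, (∀ j, u j ∈ 𝓕) →
    ∃ (φ : ℕ → ℕ) (g : ℂ → ℂ × ℂ), StrictMono φ ∧
      TendstoLocallyUniformlyOn (fun j => u (φ j)) g atTop Δ

/-- `(ℂ*)²` is of `ds²_FS`-limit type if every non-normal family of holomorphic maps of a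
domain `Δ ⊆ ℂ` into `(ℂ*)²` with no compactly divergent sequence admits a rescaling
`ξ ↦ f j (p j + ρ j ξ)` converging locally uniformly on `ℂ` to a non-constant
`ds²_FS`-Brody curve in `(ℂ*)²`. -/
def IsFSLimitType : Prop :=
  ∀ Δ : Set ℂ, IsOpen Δ → IsConnected Δ →
    ∀ 𝓕 : Set (ℂ → ℂ × ℂ),
      (∀ f ∈ 𝓕, DifferentiableOn ℂ f Δ ∧ ∀ z ∈ Δ, f z ∈ CstarSq) →
      ¬IsNormalFamily 𝓕 Δ →
      (∀ u : ℕ → ℂ → ℂ × ℂ, (∀ j, u j ∈ 𝓕) → ¬CompactlyDivergent u Δ) →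
      ∃ (p : ℕ → ℂ) (p₀ : ℂ) (fs : ℕ → ℂ → ℂ × ℂ) (ρ : ℕ → ℝ) (g : ℂ → ℂ × ℂ),
        (∀ j, p j ∈ Δ) ∧ p₀ ∈ Δ ∧ Tendsto p atTop (𝓝 p₀) ∧
        (∀ j, fs j ∈ 𝓕) ∧ (∀ j, 0 < ρ j) ∧ Tendsto ρ atTop (𝓝 0) ∧
        TendstoLocallyUniformly (fun (j : ℕ) (ξ : ℂ) => fs j (p j + (ρ j : ℂ) * ξ))
          g atTop ∧
        Differentiable ℂ g ∧ (∀ ξ, g ξ ∈ CstarSq) ∧ ¬(∃ y, ∀ ξ, g ξ = y) ∧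
        ∃ c : ℝ, ∀ ξ, fsLen (g ξ) (deriv g ξ) ≤ c

/-- The profile curve `ζ ↦ (e^{iζ}, e^{ζ²})` of our counterexample family. -/
noncomputable def PsiCE : ℂ → ℂ × ℂ :=
  fun ζ => (Complex.exp (Complex.I * ζ), Complex.exp (ζ ^ 2))

lemma psiCE_continuous : Continuous PsiCE := by
  unfold PsiCE; fun_prop

/-- If `exp (w j)` converges to a nonzero limit, then `(w j).re` converges. -/
lemma tendsto_re_of_tendsto_cexp {w : ℕ → ℂ} {a : ℂ} (ha : a ≠ 0)
    (h : Tendsto (fun j => Complex.exp (w j)) atTop (𝓝 a)) :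
    Tendsto (fun j => (w j).re) atTop (𝓝 (Real.log ‖a‖)) := by
  have h1 : Tendsto (fun j => ‖Complex.exp (w j)‖) atTop (𝓝 ‖a‖) := h.norm
  have h2 : Tendsto (fun j => Real.log ‖Complex.exp (w j)‖) atTop (𝓝 (Real.log ‖a‖)) :=
    (Real.continuousAt_log (norm_ne_zero_iff.2 ha)).tendsto.comp h1
  refine h2.congr fun j => ?_
  rw [Complex.norm_exp, Real.log_exp]

/-- The key quantitative lower bound: along the diagonal the FS-length of the rescaled
profile curve grows linearly. -/
lemma psiCE_fsLen_lower (lam t : ℝ) (hlam : 0 < lam) (ht : 1 ≤ t) :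
    lam * t / 3 ≤
      fsLen (PsiCE ((t : ℂ) + (t : ℂ) * Complex.I))
        (Complex.exp (Complex.I * ((t : ℂ) + (t : ℂ) * Complex.I)) * (Complex.I * (lam : ℂ)),
         Complex.exp (((t : ℂ) + (t : ℂ) * Complex.I) ^ 2) *
           (2 * ((t : ℂ) + (t : ℂ) * Complex.I) * (lam : ℂ))) := by
  set ζ : ℂ := (t : ℂ) + (t : ℂ) * Complex.I with hζ
  set e : ℝ := Real.exp (-t) with he
  have he_pos : 0 < e := Real.exp_pos _
  have he_le : e ≤ 1 := by
    rw [he]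
    exact Real.exp_le_one_iff.2 (by linarith)
  have hw1 : ‖Complex.exp (Complex.I * ζ)‖ = e := by
    rw [Complex.norm_exp]
    congr 1
    simp [hζ]
  have hreζsq : (ζ ^ 2).re = 0 := by
    simp [hζ, pow_two, Complex.mul_re]
  have hw2 : ‖Complex.exp (ζ ^ 2)‖ = 1 := by
    rw [Complex.norm_exp, hreζsq, Real.exp_zero]
  have hv1sq : ‖Complex.exp (Complex.I * ζ) * (Complex.I * (lam : ℂ))‖ ^ 2 =
      e ^ 2 * lam ^ 2 := by
    rw [norm_mul, norm_mul, hw1]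
    simp [abs_of_pos hlam]
    ring
  have hζnormsq : Complex.normSq ζ = 2 * t ^ 2 := by
    simp [hζ, Complex.normSq_apply]
    ring
  have hv2sq : ‖Complex.exp (ζ ^ 2) * (2 * ζ * (lam : ℂ))‖ ^ 2 = 8 * lam ^ 2 * t ^ 2 := by
    rw [norm_mul, hw2, one_mul, Complex.sq_norm]
    rw [show (2 : ℂ) * ζ * (lam : ℂ) = ((2 * lam : ℝ) : ℂ) * ζ by push_cast; ring]
    rw [Complex.normSq_mul, Complex.normSq_ofReal, hζnormsq]
    ring
  have m1 : Complex.exp (Complex.I * ζ) * starRingEnd ℂ (Complex.exp (Complex.I * ζ)) =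
      ((e ^ 2 : ℝ) : ℂ) := by
    rw [Complex.mul_conj, Complex.normSq_eq_norm_sq, hw1]
  have m2 : Complex.exp (ζ ^ 2) * starRingEnd ℂ (Complex.exp (ζ ^ 2)) = 1 := by
    rw [Complex.mul_conj, Complex.normSq_eq_norm_sq, hw2]
    norm_num
  have hcross : Complex.exp (Complex.I * ζ) * (Complex.I * (lam : ℂ)) *
        starRingEnd ℂ (Complex.exp (Complex.I * ζ)) +
      Complex.exp (ζ ^ 2) * (2 * ζ * (lam : ℂ)) * starRingEnd ℂ (Complex.exp (ζ ^ 2)) =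
      Complex.I * ((lam * e ^ 2 : ℝ) : ℂ) + 2 * ζ * (lam : ℂ) := by
    calc Complex.exp (Complex.I * ζ) * (Complex.I * (lam : ℂ)) *
          starRingEnd ℂ (Complex.exp (Complex.I * ζ)) +
        Complex.exp (ζ ^ 2) * (2 * ζ * (lam : ℂ)) * starRingEnd ℂ (Complex.exp (ζ ^ 2))
        = Complex.I * (lam : ℂ) * (Complex.exp (Complex.I * ζ) *
            starRingEnd ℂ (Complex.exp (Complex.I * ζ))) +
          2 * ζ * (lam : ℂ) * (Complex.exp (ζ ^ 2) *
            starRingEnd ℂ (Complex.exp (ζ ^ 2))) := by ring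
      _ = Complex.I * ((lam * e ^ 2 : ℝ) : ℂ) + 2 * ζ * (lam : ℂ) := by
          rw [m1, m2]
          push_cast
          ring
  have hcross_sq : ‖Complex.exp (Complex.I * ζ) * (Complex.I * (lam : ℂ)) *
        starRingEnd ℂ (Complex.exp (Complex.I * ζ)) +
      Complex.exp (ζ ^ 2) * (2 * ζ * (lam : ℂ)) * starRingEnd ℂ (Complex.exp (ζ ^ 2))‖ ^ 2 =
      (2 * t * lam) ^ 2 + (lam * e ^ 2 + 2 * t * lam) ^ 2 := by
    rw [hcross, Complex.sq_norm, Complex.normSq_apply]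
    simp [hζ, Complex.add_re, Complex.add_im, Complex.mul_re, Complex.mul_im, pow_two]
  have hfs : fsLen (PsiCE ζ)
      (Complex.exp (Complex.I * ζ) * (Complex.I * (lam : ℂ)),
       Complex.exp (ζ ^ 2) * (2 * ζ * (lam : ℂ))) =
      Real.sqrt ((lam ^ 2 * (8 * t ^ 2 + e ^ 2 * (2 + 8 * t ^ 2 - 4 * t))) /
        (1 + e ^ 2 + 1 ^ 2) ^ 2) := by
    unfold fsLen PsiCE
    rw [hw1, hw2, hv1sq, hv2sq, hcross_sq]
    congr 1
    ring_nf
  rw [hfs]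
  have hq : (0 : ℝ) ≤ 2 + 8 * t ^ 2 - 4 * t := by nlinarith
  have hNnn : (0 : ℝ) ≤ lam ^ 2 * (8 * t ^ 2 + e ^ 2 * (2 + 8 * t ^ 2 - 4 * t)) :=
    mul_nonneg (sq_nonneg _) (add_nonneg (by positivity) (mul_nonneg (sq_nonneg _) hq))
  rw [Real.le_sqrt (by positivity) (div_nonneg hNnn (by positivity))]
  rw [div_pow, div_le_div_iff₀ (by norm_num) (by positivity)]
  have he2 : e ^ 2 ≤ 1 := by nlinarith [he_le, he_pos.le]
  have h9 : (2 + e ^ 2) ^ 2 ≤ 9 := by nlinarith [he2, sq_nonneg e]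
  nlinarith [he_le, he_pos.le, sq_nonneg e, sq_nonneg (lam * t), hq, sq_nonneg lam,
    mul_nonneg (mul_nonneg (sq_nonneg lam) (sq_nonneg e)) hq,
    mul_le_mul_of_nonneg_left h9 (sq_nonneg (lam * t)), sq_nonneg (lam * e)]

/-- `(ℂ*)²` is not of `ds²_FS`-limit type, where `ds²_FS` is the restriction
to `(ℂ*)²` of the Fubini–Study metric of `ℙ²(ℂ)`. -/
theorem CstarSq_not_FS_limit_type : ¬IsFSLimitType := by
  intro h
  -- the counterexample family `f_n(z) = (e^{inz}, e^{(nz)²})`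
  set F : ℕ → ℂ → ℂ × ℂ := fun n z => PsiCE ((n : ℂ) * z) with hF
  have hhol : ∀ f ∈ Set.range F, DifferentiableOn ℂ f Set.univ ∧
      ∀ z ∈ Set.univ, f z ∈ CstarSq := by
    rintro f ⟨n, rfl⟩
    constructor
    · have hd : Differentiable ℂ fun z : ℂ => (n : ℂ) * z := differentiable_id.const_mul _
      exact (((hd.const_mul Complex.I).cexp).prodMk ((hd.pow 2).cexp)).differentiableOn
    · intro z _
      exact ⟨Complex.exp_ne_zero _, Complex.exp_ne_zero _⟩
  have hnn : ¬IsNormalFamily (Set.range F) Set.univ := by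
    intro hN
    obtain ⟨φ, g, hφ, hg⟩ := hN F fun j => Set.mem_range_self j
    have h1 : Tendsto (fun j => (F (φ j) 1).2) atTop (𝓝 (g 1).2) :=
      (continuous_snd.tendsto _).comp (hg.tendsto_at (Set.mem_univ 1))
    have h2 : Tendsto (fun j => ‖(F (φ j) 1).2‖) atTop (𝓝 ‖(g 1).2‖) := h1.norm
    have h3 : Tendsto (fun j => ‖(F (φ j) 1).2‖) atTop atTop := by
      have heq : ∀ j, ‖(F (φ j) 1).2‖ = Real.exp ((φ j : ℝ) ^ 2) := by
        intro j
        show ‖Complex.exp (((φ j : ℂ) * 1) ^ 2)‖ = _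
        rw [Complex.norm_exp]
        congr 1
        have : ((φ j : ℂ) * 1) ^ 2 = (((φ j : ℝ) ^ 2 : ℝ) : ℂ) := by push_cast; ring
        rw [this, Complex.ofReal_re]
      have hsq : Tendsto (fun j => ((φ j : ℝ)) ^ 2) atTop atTop := by
        apply tendsto_atTop_mono (fun j => ?_) tendsto_natCast_atTop_atTop
        exact_mod_cast le_trans hφ.le_apply (Nat.le_self_pow (by norm_num) (φ j))
      exact (Real.tendsto_exp_atTop.comp hsq).congr fun j => (heq j).symm
    exact not_tendsto_nhds_of_tendsto_atTop h3 _ h2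
  have hnd : ∀ u : ℕ → ℂ → ℂ × ℂ, (∀ j, u j ∈ Set.range F) →
      ¬CompactlyDivergent u Set.univ := by
    intro u hu hcd
    obtain ⟨j₀, hj⟩ := hcd {0} (Set.subset_univ _) isCompact_singleton {(1, 1)}
      (by
        intro x hx
        rw [Set.mem_singleton_iff] at hx
        subst hx
        exact ⟨one_ne_zero, one_ne_zero⟩)
      isCompact_singleton
    obtain ⟨n, hn⟩ := hu j₀
    refine hj j₀ le_rfl 0 rfl ?_
    rw [← hn]
    show F n 0 ∈ ({(1, 1)} : Set (ℂ × ℂ))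
    simp [hF, PsiCE]
  obtain ⟨p, p₀, fs, ρ, g, hpΔ, hp₀, hpt_p, hfs, hρpos, hρ0, hconv, hgdiff, hgmem, hgnc,
    C, hC⟩ := h Set.univ isOpen_univ isConnected_univ (Set.range F) hhol hnn hnd
  -- extract indices
  choose m hm using hfs
  set c : ℕ → ℂ := fun j => (m j : ℂ) * p j with hc
  set lam : ℕ → ℝ := fun j => (m j : ℝ) * ρ j with hlamdef
  have hlam_nonneg : ∀ j, 0 ≤ lam j := fun j => mul_nonneg (Nat.cast_nonneg _) (hρpos j).le
  -- pointwise convergence of the rescaled profile curve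
  have key : ∀ ξ : ℂ, Tendsto (fun j => PsiCE (c j + ((lam j : ℝ) : ℂ) * ξ)) atTop
      (𝓝 (g ξ)) := by
    intro ξ
    have h1 := (tendstoLocallyUniformlyOn_univ.2 hconv).tendsto_at (Set.mem_univ ξ)
    refine Tendsto.congr (fun j => ?_) h1
    rw [← hm j]
    show PsiCE ((m j : ℂ) * (p j + (ρ j : ℂ) * ξ)) = _
    simp only [hc, hlamdef]
    congr 1
    push_cast
    ring
  -- convergence of the real parameters
  have hI1 : Tendsto (fun j => Complex.exp (Complex.I * (c j + ((lam j : ℝ) : ℂ) *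
      Complex.I))) atTop (𝓝 (g Complex.I).1) := by
    have := (continuous_fst.tendsto _).comp (key Complex.I)
    exact this
  have hI2 : Tendsto (fun j => Complex.exp (Complex.I * (c j + ((lam j : ℝ) : ℂ) *
      (-Complex.I)))) atTop (𝓝 (g (-Complex.I)).1) := by
    have := (continuous_fst.tendsto _).comp (key (-Complex.I))
    exact this
  have hZ : Tendsto (fun j => Complex.exp ((c j + ((lam j : ℝ) : ℂ) * 0) ^ 2)) atTop
      (𝓝 (g 0).2) := by
    have := (continuous_snd.tendsto _).comp (key 0)
    exact this
  have t1 : Tendsto (fun j => -(c j).im - lam j) atTop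
      (𝓝 (Real.log ‖(g Complex.I).1‖)) := by
    have := tendsto_re_of_tendsto_cexp (hgmem Complex.I).1 hI1
    refine this.congr fun j => ?_
    simp [Complex.mul_re, Complex.mul_im]
    ring
  have t2 : Tendsto (fun j => -(c j).im + lam j) atTop
      (𝓝 (Real.log ‖(g (-Complex.I)).1‖)) := by
    have := tendsto_re_of_tendsto_cexp (hgmem (-Complex.I)).1 hI2
    refine this.congr fun j => ?_
    simp [Complex.mul_re, Complex.mul_im]
    ring
  have t3 : Tendsto (fun j => (c j).re ^ 2 - (c j).im ^ 2) atTop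
      (𝓝 (Real.log ‖(g 0).2‖)) := by
    have := tendsto_re_of_tendsto_cexp (hgmem 0).2 hZ
    refine this.congr fun j => ?_
    simp [pow_two, Complex.mul_re]
  set lamL : ℝ := (Real.log ‖(g (-Complex.I)).1‖ - Real.log ‖(g Complex.I).1‖) / 2
    with hlamLdef
  have hlam_t : Tendsto lam atTop (𝓝 lamL) := by
    have := (t2.sub t1).div_const 2
    refine this.congr fun j => ?_
    ring
  have hlamL_nonneg : 0 ≤ lamL := ge_of_tendsto' hlam_t hlam_nonneg
  set τ : ℝ := -((Real.log ‖(g Complex.I).1‖ + Real.log ‖(g (-Complex.I)).1‖) / 2) with hτdef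
  have him : Tendsto (fun j => (c j).im) atTop (𝓝 τ) := by
    have := ((t1.add t2).div_const 2).neg
    refine this.congr fun j => ?_
    ring
  have hre2 : Tendsto (fun j => (c j).re ^ 2) atTop
      (𝓝 (Real.log ‖(g 0).2‖ + τ ^ 2)) := by
    have := t3.add (him.pow 2)
    refine this.congr fun j => ?_
    ring
  -- boundedness of c and extraction of a convergent subsequence
  obtain ⟨M1, hM1⟩ := hre2.bddAbove_range
  obtain ⟨M2, hM2⟩ := (him.pow 2).bddAbove_range
  have hball : ∀ j, c j ∈ Metric.closedBall (0 : ℂ) (Real.sqrt (M1 + M2)) := by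
    intro j
    rw [Metric.mem_closedBall, dist_zero_right, Complex.norm_def]
    apply Real.sqrt_le_sqrt
    have h1 : (c j).re ^ 2 ≤ M1 := hM1 (Set.mem_range_self j)
    have h2 : (c j).im ^ 2 ≤ M2 := hM2 (Set.mem_range_self j)
    rw [Complex.normSq_apply]
    nlinarith
  obtain ⟨cL, -, φ, hφ, hcφ⟩ := tendsto_subseq_of_bounded Metric.isBounded_closedBall hball
  -- identify the limit function
  have hgeq : ∀ ξ : ℂ, g ξ = PsiCE (cL + ((lamL : ℝ) : ℂ) * ξ) := by
    intro ξ
    have h1 : Tendsto (fun j => PsiCE (c (φ j) + ((lam (φ j) : ℝ) : ℂ) * ξ)) atTop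
        (𝓝 (g ξ)) := (key ξ).comp hφ.tendsto_atTop
    have h2 : Tendsto (fun j => c (φ j) + ((lam (φ j) : ℝ) : ℂ) * ξ) atTop
        (𝓝 (cL + (lamL : ℂ) * ξ)) := by
      refine Tendsto.add hcφ ?_
      exact Tendsto.mul_const ξ
        ((Complex.continuous_ofReal.tendsto _).comp (hlam_t.comp hφ.tendsto_atTop))
    have h3 : Tendsto (fun j => PsiCE (c (φ j) + ((lam (φ j) : ℝ) : ℂ) * ξ)) atTop
        (𝓝 (PsiCE (cL + (lamL : ℂ) * ξ))) := (psiCE_continuous.tendsto _).comp h2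
    exact tendsto_nhds_unique h1 h3
  rcases eq_or_lt_of_le hlamL_nonneg with h0 | hpos
  · -- λ = 0 : the limit is constant, contradiction
    refine hgnc ⟨PsiCE cL, fun ξ => ?_⟩
    rw [hgeq ξ, ← h0]
    norm_num
  · -- λ > 0 : the limit has unbounded FS-length, contradiction
    have hgfun : g = fun ξ => PsiCE (cL + (lamL : ℂ) * ξ) := funext hgeq
    have hderiv : ∀ ξ : ℂ, deriv g ξ =
        (Complex.exp (Complex.I * (cL + (lamL : ℂ) * ξ)) * (Complex.I * (lamL : ℂ)),
         Complex.exp ((cL + (lamL : ℂ) * ξ) ^ 2) *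
           (2 * (cL + (lamL : ℂ) * ξ) * (lamL : ℂ))) := by
      intro ξ
      have h1 : HasDerivAt (fun ξ : ℂ => cL + (lamL : ℂ) * ξ) ((lamL : ℂ)) ξ := by
        simpa using ((hasDerivAt_id ξ).const_mul (lamL : ℂ)).const_add cL
      have h2 : HasDerivAt (fun ξ : ℂ => Complex.exp (Complex.I * (cL + (lamL : ℂ) * ξ)))
          (Complex.exp (Complex.I * (cL + (lamL : ℂ) * ξ)) * (Complex.I * (lamL : ℂ))) ξ :=
        (h1.const_mul Complex.I).cexp
      have h3 : HasDerivAt (fun ξ : ℂ => (cL + (lamL : ℂ) * ξ) ^ 2)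
          (2 * (cL + (lamL : ℂ) * ξ) * (lamL : ℂ)) ξ := by
        have := h1.fun_pow 2
        simpa using this
      have h4 := h3.cexp
      rw [hgfun]
      exact (h2.prodMk h4).deriv
    set t : ℝ := max 1 (3 * (|C| + 1) / lamL) with htdef
    have ht1 : 1 ≤ t := le_max_left _ _
    have ht2 : 3 * (|C| + 1) ≤ lamL * t := by
      have h' : 3 * (|C| + 1) / lamL ≤ t := le_max_right _ _
      rw [div_le_iff₀ hpos] at h'
      linarith
    set ζ : ℂ := (t : ℂ) + (t : ℂ) * Complex.I with hζdef
    set ξt : ℂ := (ζ - cL) / (lamL : ℂ) with hξtdef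
    have hlamLne : ((lamL : ℝ) : ℂ) ≠ 0 := by
      exact_mod_cast ne_of_gt hpos
    have hξ : cL + (lamL : ℂ) * ξt = ζ := by
      rw [hξtdef]
      field_simp
      ring
    have hlow := psiCE_fsLen_lower lamL t hpos ht1
    have hub := hC ξt
    rw [hgeq ξt, hderiv ξt, hξ] at hub
    rw [← hζdef] at hlow
    have : lamL * t / 3 ≤ C := le_trans hlow hub
    have hC' : C ≤ |C| := le_abs_self C
    linarith
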